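/- Let (X,d) be a complete metric space, I a discrete interval unbounded below, and suppose (Δ) u_{t+1} = F_t(u_t) has a nonempty, positively invariant, closed and bounded nonautonomous subset 𝓐 with 𝓐(t) ⊆ U_t for all t. If (Δ) is pullback asymptotically compact, then the fibres 𝓐⋆(τ) := ⋂_{s≥0} φ(τ;τ−s,𝓐(τ−s)), τ ∈ I, define a nonempty, compact, invariant nonautonomous set 𝓐⋆ ⊆ 𝓐 which is maximal among invariant nonautonomous subsets of 𝓐 and which pullback attracts 𝓐, i.e. lim_{s→∞} dist(φ(τ;τ−s,𝓐(τ−s)), 𝓐⋆(τ)) = 0 for all τ ∈ I. -/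

import Mathlib

open Filter Topology Metric Bornology

/-- Iterates of a nonautonomous difference equation: `sol F τ u n = φ(τ+n; τ, u)`. -/
def sol {X : Type*} (F : ℤ → X → X) (τ : ℤ) (u : X) : ℕ → X
  | 0 => u
  | n + 1 => F (τ + (n : ℤ)) (sol F τ u n)

/-- General solution `φ(t; τ, u)` of the difference equation `u_{t+1} = F_t(u_t)`. -/
def phi {X : Type*} (F : ℤ → X → X) (t τ : ℤ) (u : X) : X :=
  sol F τ u (t - τ).toNat

/-- Hausdorff semidistance `dist(A,B) = sup_{a ∈ A} inf_{b ∈ B} d(a,b)`. -/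
noncomputable def semidist {X : Type*} [MetricSpace X] (A B : Set X) : ℝ :=
  sSup ((fun a => Metric.infDist a B) '' A)

lemma sol_add {X : Type*} (F : ℤ → X → X) (σ : ℤ) (u : X) (m n : ℕ) :
    sol F σ u (m + n) = sol F (σ + m) (sol F σ u m) n := by
  induction n with
  | zero => rfl
  | succ n ih =>
      show sol F σ u ((m + n) + 1) = _
      rw [sol, ih, sol]
      congr 1
      push_cast; ring

lemma phi_sub {X : Type*} (F : ℤ → X → X) (τ : ℤ) (s : ℕ) (u : X) :
    phi F τ (τ - (s : ℤ)) u = sol F (τ - s) u s := by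
  unfold phi
  congr 1
  omega

lemma phi_split {X : Type*} (F : ℤ → X → X) (τ : ℤ) (s₀ s : ℕ) (h : s₀ ≤ s) (u : X) :
    phi F τ (τ - (s : ℤ)) u = phi F τ (τ - (s₀ : ℤ)) (sol F (τ - s) u (s - s₀)) := by
  obtain ⟨m, rfl⟩ : ∃ m, s = m + s₀ := ⟨s - s₀, by omega⟩
  rw [phi_sub, phi_sub, Nat.add_sub_cancel, sol_add]
  congr 1
  omega

lemma phi_step {X : Type*} (F : ℤ → X → X) (t : ℤ) (n : ℕ) (u : X) :
    phi F (t + 1) (t - (n : ℤ)) u = F t (phi F t (t - (n : ℤ)) u) := by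
  have h1 : t + 1 - (t - (n : ℤ)) = ((n + 1 : ℕ) : ℤ) := by push_cast; ring
  have h2 : t - (t - (n : ℤ)) = ((n : ℕ) : ℤ) := by ring
  unfold phi
  rw [h1, h2, Int.toNat_natCast, Int.toNat_natCast, sol]
  congr 1
  omega

lemma phi_self {X : Type*} (F : ℤ → X → X) (τ : ℤ) (u : X) :
    phi F τ τ u = u := by
  unfold phi
  rw [sub_self]
  rfl

/-- the pullback construction `𝓐⋆` yields a nonempty, compact,
invariant, maximal nonautonomous set pullback attracting `𝓐` (Proposition 1). -/
theorem pullback_construction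
    {X : Type*} [MetricSpace X] [CompleteSpace X]
    -- discrete interval I, unbounded below
    (I : Set ℤ) (hI : ∀ ⦃a b c : ℤ⦄, a ∈ I → c ∈ I → a ≤ b → b ≤ c → b ∈ I)
    (hIlb : ∀ t : ℤ, ∃ s ∈ I, s ≤ t)
    -- the closed sets U_t and the right-hand sides F_t : U_t → U_{t+1}
    (U : ℤ → Set X) (hUcl : ∀ t ∈ I, IsClosed (U t))
    (F : ℤ → X → X)
    (hFc : ∀ t, t ∈ I → t + 1 ∈ I → ContinuousOn (F t) (U t))
    (hFmap : ∀ t, t ∈ I → t + 1 ∈ I → ∀ u ∈ U t, F t u ∈ U (t + 1))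
    -- 𝓐: nonempty, positively invariant, closed and bounded nonautonomous set in 𝓤
    (A : ℤ → Set X)
    (hAU : ∀ t ∈ I, A t ⊆ U t)
    (hAne : ∀ t ∈ I, (A t).Nonempty)
    (hAcl : ∀ t ∈ I, IsClosed (A t))
    (hAbd : ∃ C : Set X, IsBounded C ∧ ∀ t ∈ I, A t ⊆ C)
    (hApos : ∀ t, t ∈ I → t + 1 ∈ I → ∀ u ∈ A t, F t u ∈ A (t + 1))
    -- pullback asymptotic compactness
    (hpac : ∀ τ ∈ I, ∀ s : ℕ → ℕ, Tendsto s atTop atTop →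
      ∀ a : ℕ → X, (∀ n, a n ∈ U (τ - (s n : ℤ))) → IsBounded (Set.range a) →
        ∃ ψ : ℕ → ℕ, StrictMono ψ ∧
          ∃ x : X, Tendsto (fun n => phi F τ (τ - (s (ψ n) : ℤ)) (a (ψ n))) atTop (𝓝 x))
    -- the fibres 𝓐⋆(τ)
    (Astar : ℤ → Set X)
    (hAstar : ∀ τ : ℤ, Astar τ = ⋂ s : ℕ, phi F τ (τ - (s : ℤ)) '' A (τ - (s : ℤ))) :
    -- conclusion: nonempty, compact, contained in 𝓐, invariant, maximal, pullback attracting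
    (∀ τ ∈ I, (Astar τ).Nonempty ∧ IsCompact (Astar τ) ∧ Astar τ ⊆ A τ) ∧
    (∀ t, t ∈ I → t + 1 ∈ I → F t '' Astar t = Astar (t + 1)) ∧
    (∀ C : ℤ → Set X, (∀ t ∈ I, C t ⊆ A t) →
      (∀ t, t ∈ I → t + 1 ∈ I → F t '' C t = C (t + 1)) →
      ∀ t ∈ I, C t ⊆ Astar t) ∧
    (∀ τ ∈ I,
      Tendsto (fun s : ℕ => semidist (phi F τ (τ - (s : ℤ)) '' A (τ - (s : ℤ))) (Astar τ))
        atTop (𝓝 0)) := by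
  classical
  obtain ⟨Cb, hCbd, hCsub⟩ := hAbd
  -- I is closed downward
  have hIin : ∀ τ ∈ I, ∀ t : ℤ, t ≤ τ → t ∈ I := by
    intro τ hτ t ht
    obtain ⟨s', hs', hle⟩ := hIlb t
    exact hI hs' hτ hle ht
  -- sol maps A into A
  have hsolA : ∀ σ : ℤ, ∀ n : ℕ, σ + n ∈ I → ∀ u ∈ A σ, sol F σ u n ∈ A (σ + n) := by
    intro σ n
    induction n with
    | zero => intro h u hu; simpa [sol] using hu
    | succ n ih =>
        intro h u hu
        have hcast : σ + ((n + 1 : ℕ) : ℤ) = (σ + n) + 1 := by push_cast; ring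
        rw [hcast] at h ⊢
        have hσn : σ + (n : ℤ) ∈ I := hIin _ h _ (by omega)
        have := hApos (σ + n) hσn h _ (ih hσn u hu)
        rw [sol]
        exact this
  -- sol maps U into U
  have hsolU : ∀ σ : ℤ, ∀ n : ℕ, σ + n ∈ I → ∀ u ∈ U σ, sol F σ u n ∈ U (σ + n) := by
    intro σ n
    induction n with
    | zero => intro h u hu; simpa [sol] using hu
    | succ n ih =>
        intro h u hu
        have hcast : σ + ((n + 1 : ℕ) : ℤ) = (σ + n) + 1 := by push_cast; ring
        rw [hcast] at h ⊢
        have hσn : σ + (n : ℤ) ∈ I := hIin _ h _ (by omega)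
        have := hFmap (σ + n) hσn h _ (ih hσn u hu)
        rw [sol]
        exact this
  -- sol is continuous on U
  have hsolC : ∀ σ : ℤ, ∀ n : ℕ, σ + n ∈ I → ContinuousOn (fun u => sol F σ u n) (U σ) := by
    intro σ n
    induction n with
    | zero =>
        intro _h
        have : (fun u : X => sol F σ u 0) = fun u => u := rfl
        rw [this]; exact continuousOn_id
    | succ n ih =>
        intro h
        have hcast : σ + ((n + 1 : ℕ) : ℤ) = (σ + n) + 1 := by push_cast; ring
        rw [hcast] at h
        have hσn : σ + (n : ℤ) ∈ I := hIin _ h _ (by omega)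
        have hc : ContinuousOn (F (σ + n)) (U (σ + n)) := hFc _ hσn h
        have hm : Set.MapsTo (fun u => sol F σ u n) (U σ) (U (σ + n)) :=
          fun u hu => hsolU σ n hσn u hu
        have hcomp := ContinuousOn.comp hc (ih hσn) hm
        have : (fun u : X => sol F σ u (n + 1))
            = (F (σ + n)) ∘ (fun u => sol F σ u n) := rfl
        rw [this]; exact hcomp
  -- phi maps A(τ - s) into A τ
  have hphiA : ∀ τ ∈ I, ∀ (m : ℕ), ∀ u ∈ A (τ - (m : ℤ)), phi F τ (τ - (m : ℤ)) u ∈ A τ := by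
    intro τ hτ m u hu
    rw [phi_sub]
    have h1 : (τ - (m : ℤ)) + (m : ℤ) = τ := by ring
    have := hsolA (τ - m) m (by rw [h1]; exact hτ) u hu
    rwa [h1] at this
  -- nested images
  have hKmono : ∀ τ ∈ I, ∀ s' s : ℕ, s' ≤ s →
      phi F τ (τ - (s : ℤ)) '' A (τ - (s : ℤ)) ⊆ phi F τ (τ - (s' : ℤ)) '' A (τ - (s' : ℤ)) := by
    intro τ hτ s' s hss x hx
    obtain ⟨u, hu, rfl⟩ := hx
    have h1 : (τ - (s : ℤ)) + ((s - s' : ℕ) : ℤ) = τ - s' := by omega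
    have hmem : sol F (τ - s) u (s - s') ∈ A (τ - (s' : ℤ)) := by
      have := hsolA (τ - s) (s - s') (by rw [h1]; exact hIin τ hτ _ (by omega)) u hu
      rwa [h1] at this
    exact ⟨_, hmem, (phi_split F τ s' s hss u).symm⟩
  -- bounded ranges
  have hrange : ∀ τ ∈ I, ∀ (s : ℕ → ℕ) (a : ℕ → X),
      (∀ n, a n ∈ A (τ - (s n : ℤ))) → IsBounded (Set.range a) := by
    intro τ hτ s a ha
    exact hCbd.subset (Set.range_subset_iff.2 fun n =>
      hCsub _ (hIin τ hτ _ (by omega)) (ha n))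
  -- KEY LEMMA: limits of pullback sequences lie in Astar
  have hLmem : ∀ τ ∈ I, ∀ (s : ℕ → ℕ) (a : ℕ → X), Tendsto s atTop atTop →
      (∀ n, a n ∈ A (τ - (s n : ℤ))) → ∀ x : X,
      Tendsto (fun n => phi F τ (τ - (s n : ℤ)) (a n)) atTop (𝓝 x) → x ∈ Astar τ := by
    intro τ hτ s a hs ha x hx
    rw [hAstar]
    refine Set.mem_iInter.2 fun s₀ => ?_
    obtain ⟨N, hN⟩ := eventually_atTop.1 (hs.eventually_ge_atTop s₀)
    have hτ'I : τ - (s₀ : ℤ) ∈ I := hIin τ hτ _ (by omega)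
    have hkey : ∀ n, (τ - (s₀ : ℤ)) - ((s (n + N) - s₀ : ℕ) : ℤ) = τ - (s (n + N) : ℤ) := by
      intro n; have := hN (n + N) (by omega); omega
    have hs't : Tendsto (fun n => s (n + N) - s₀) atTop atTop := by
      apply tendsto_atTop_atTop.2
      intro b
      obtain ⟨M, hM⟩ := eventually_atTop.1 (hs.eventually_ge_atTop (b + s₀))
      exact ⟨M, fun n hn => by have := hM (n + N) (by omega); omega⟩
    have ha'U : ∀ n, a (n + N) ∈ U ((τ - (s₀ : ℤ)) - ((s (n + N) - s₀ : ℕ) : ℤ)) := by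
      intro n
      rw [hkey n]
      exact hAU _ (hIin τ hτ _ (by omega)) (ha _)
    have hbd : IsBounded (Set.range fun n => a (n + N)) :=
      hCbd.subset (Set.range_subset_iff.2 fun n =>
        hCsub _ (hIin τ hτ _ (by omega)) (ha (n + N)))
    obtain ⟨ψ, hψ, y, hy⟩ := hpac (τ - (s₀ : ℤ)) hτ'I (fun n => s (n + N) - s₀) hs't
      (fun n => a (n + N)) ha'U hbd
    have hbA : ∀ n, phi F (τ - (s₀ : ℤ)) ((τ - (s₀ : ℤ)) - ((s (n + N) - s₀ : ℕ) : ℤ)) (a (n + N))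
        ∈ A (τ - (s₀ : ℤ)) := by
      intro n
      apply hphiA _ hτ'I
      rw [hkey n]
      exact ha (n + N)
    have hyA : y ∈ A (τ - (s₀ : ℤ)) :=
      (hAcl _ hτ'I).mem_of_tendsto hy (Filter.Eventually.of_forall fun n => hbA (ψ n))
    have hyU : y ∈ U (τ - (s₀ : ℤ)) := hAU _ hτ'I hyA
    have hgc : ContinuousOn (fun u => sol F (τ - (s₀ : ℤ)) u s₀) (U (τ - (s₀ : ℤ))) := by
      apply hsolC
      have h1 : (τ - (s₀ : ℤ)) + (s₀ : ℤ) = τ := by ring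
      rw [h1]; exact hτ
    have hbU : ∀ n : ℕ, phi F (τ - (s₀ : ℤ)) ((τ - (s₀ : ℤ)) - ((s (n + N) - s₀ : ℕ) : ℤ)) (a (n + N))
        ∈ U (τ - (s₀ : ℤ)) := fun n => hAU _ hτ'I (hbA n)
    have htend1 : Tendsto (fun n => sol F (τ - (s₀ : ℤ))
        (phi F (τ - (s₀ : ℤ)) ((τ - (s₀ : ℤ)) - ((s (ψ n + N) - s₀ : ℕ) : ℤ)) (a (ψ n + N))) s₀)
        atTop (𝓝 (sol F (τ - (s₀ : ℤ)) y s₀)) := by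
      apply (hgc y hyU).tendsto.comp
      rw [tendsto_nhdsWithin_iff]
      exact ⟨hy, Filter.Eventually.of_forall fun n => hbU (ψ n)⟩
    have hcomp : ∀ n, sol F (τ - (s₀ : ℤ))
        (phi F (τ - (s₀ : ℤ)) ((τ - (s₀ : ℤ)) - ((s (n + N) - s₀ : ℕ) : ℤ)) (a (n + N))) s₀
        = phi F τ (τ - (s (n + N) : ℤ)) (a (n + N)) := by
      intro n
      have hsn := hN (n + N) (by omega)
      rw [phi_split F τ s₀ (s (n + N)) hsn (a (n + N)), phi_sub, phi_sub]
      rw [show (τ - (s₀ : ℤ)) - ((s (n + N) - s₀ : ℕ) : ℤ) = τ - (s (n + N) : ℤ) from by omega]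
    have htend2 : Tendsto (fun n => phi F τ (τ - (s (ψ n + N) : ℤ)) (a (ψ n + N))) atTop (𝓝 x) := by
      apply hx.comp
      exact tendsto_atTop_atTop.2 fun b =>
        ⟨b, fun n hn => le_trans (le_trans hn hψ.le_apply) (Nat.le_add_right _ _)⟩
    have heq : (fun n => sol F (τ - (s₀ : ℤ))
        (phi F (τ - (s₀ : ℤ)) ((τ - (s₀ : ℤ)) - ((s (ψ n + N) - s₀ : ℕ) : ℤ)) (a (ψ n + N))) s₀)
        = fun n => phi F τ (τ - (s (ψ n + N) : ℤ)) (a (ψ n + N)) :=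
      funext fun n => hcomp (ψ n)
    rw [heq] at htend1
    refine ⟨y, hyA, ?_⟩
    rw [phi_sub]
    exact tendsto_nhds_unique htend1 htend2
  -- nonemptiness
  have hne : ∀ τ ∈ I, (Astar τ).Nonempty := by
    intro τ hτ
    have h1 : ∀ n : ℕ, ∃ u, u ∈ A (τ - (n : ℤ)) := fun n => hAne _ (hIin τ hτ _ (by omega))
    choose a ha using h1
    obtain ⟨ψ, hψ, y, hy⟩ := hpac τ hτ id tendsto_id a
      (fun n => hAU _ (hIin τ hτ _ (by omega)) (ha n)) (hrange τ hτ id a ha)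
    exact ⟨y, hLmem τ hτ ψ (fun n => a (ψ n)) hψ.tendsto_atTop (fun n => ha (ψ n)) y
      (by simpa using hy)⟩
  -- Astar ⊆ A
  have hK0 : ∀ τ : ℤ, phi F τ (τ - ((0 : ℕ) : ℤ)) '' A (τ - ((0 : ℕ) : ℤ)) = A τ := by
    intro τ
    simp only [Nat.cast_zero, sub_zero]
    rw [show phi F τ τ = id from funext (phi_self F τ), Set.image_id]
  have hsubA : ∀ τ : ℤ, Astar τ ⊆ A τ := by
    intro τ x hx
    have := Set.mem_iInter.1 ((hAstar τ) ▸ hx) 0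
    rwa [hK0 τ] at this
  -- compactness
  have hcpt : ∀ τ ∈ I, IsCompact (Astar τ) := by
    intro τ hτ
    have hseq : IsSeqCompact (Astar τ) := by
      intro x hx
      have h1 : ∀ n : ℕ, ∃ u ∈ A (τ - (n : ℤ)), phi F τ (τ - (n : ℤ)) u = x n :=
        fun n => Set.mem_iInter.1 ((hAstar τ) ▸ hx n) n
      choose a haA haφ using h1
      obtain ⟨ψ, hψ, y, hy⟩ := hpac τ hτ id tendsto_id a
        (fun n => hAU _ (hIin τ hτ _ (by omega)) (haA n)) (hrange τ hτ id a haA)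
      have hyA : y ∈ Astar τ := hLmem τ hτ ψ (fun n => a (ψ n)) hψ.tendsto_atTop
        (fun n => haA (ψ n)) y (by simpa using hy)
      refine ⟨y, hyA, ψ, hψ, ?_⟩
      have heq : (fun n => phi F τ (τ - ((id (ψ n) : ℕ) : ℤ)) (a (ψ n))) = x ∘ ψ :=
        funext fun n => haφ (ψ n)
      rwa [heq] at hy
    exact hseq.isCompact
  -- invariance
  have hinv : ∀ t, t ∈ I → t + 1 ∈ I → F t '' Astar t = Astar (t + 1) := by
    intro t ht ht1
    apply Set.Subset.antisymm
    · rintro y ⟨x, hx, rfl⟩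
      have h1 : ∀ n : ℕ, ∃ u ∈ A (t - (n : ℤ)), phi F t (t - (n : ℤ)) u = x :=
        fun n => Set.mem_iInter.1 ((hAstar t) ▸ hx) n
      choose a haA haφ using h1
      rw [hAstar]
      refine Set.mem_iInter.2 fun s => ?_
      have hstep : F t x ∈ phi F (t + 1) ((t + 1) - ((s + 1 : ℕ) : ℤ)) ''
          A ((t + 1) - ((s + 1 : ℕ) : ℤ)) := by
        have e : (t + 1) - ((s + 1 : ℕ) : ℤ) = t - (s : ℤ) := by push_cast; ring
        rw [e]
        exact ⟨a s, haA s, by rw [phi_step, haφ s]⟩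
      exact hKmono (t + 1) ht1 s (s + 1) (by omega) hstep
    · intro x hx
      have h1 : ∀ n : ℕ, ∃ u ∈ A ((t + 1) - ((n + 1 : ℕ) : ℤ)),
          phi F (t + 1) ((t + 1) - ((n + 1 : ℕ) : ℤ)) u = x :=
        fun n => Set.mem_iInter.1 ((hAstar (t + 1)) ▸ hx) (n + 1)
      choose a haA haφ using h1
      have e : ∀ n : ℕ, (t + 1) - ((n + 1 : ℕ) : ℤ) = t - (n : ℤ) := fun n => by push_cast; ring
      have haA' : ∀ n : ℕ, a n ∈ A (t - (n : ℤ)) := fun n => (e n) ▸ haA n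
      have haφ' : ∀ n : ℕ, F t (phi F t (t - (n : ℤ)) (a n)) = x := by
        intro n
        rw [← phi_step F t n (a n), ← e n]
        exact haφ n
      obtain ⟨ψ, hψ, y, hy⟩ := hpac t ht id tendsto_id a
        (fun n => hAU _ (hIin t ht _ (by omega)) (haA' n)) (hrange t ht id a haA')
      have hyA : y ∈ Astar t := hLmem t ht ψ (fun n => a (ψ n)) hψ.tendsto_atTop
        (fun n => haA' (ψ n)) y (by simpa using hy)
      have hyU : y ∈ U t := hAU t ht (hsubA t hyA)
      have hbU : ∀ n : ℕ, phi F t (t - ((n : ℕ) : ℤ)) (a n) ∈ U t :=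
        fun n => hAU t ht (hphiA t ht n _ (haA' n))
      have htendF : Tendsto (fun n => F t (phi F t (t - ((ψ n : ℕ) : ℤ)) (a (ψ n)))) atTop
          (𝓝 (F t y)) := by
        apply ((hFc t ht ht1) y hyU).tendsto.comp
        rw [tendsto_nhdsWithin_iff]
        exact ⟨by simpa using hy, Filter.Eventually.of_forall fun n => hbU (ψ n)⟩
      have hconst : (fun n => F t (phi F t (t - ((ψ n : ℕ) : ℤ)) (a (ψ n)))) = fun _ => x :=
        funext fun n => haφ' (ψ n)
      rw [hconst] at htendF
      exact ⟨y, hyA, tendsto_nhds_unique htendF tendsto_const_nhds⟩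
  -- maximality
  have hmax : ∀ C : ℤ → Set X, (∀ t ∈ I, C t ⊆ A t) →
      (∀ t, t ∈ I → t + 1 ∈ I → F t '' C t = C (t + 1)) →
      ∀ t ∈ I, C t ⊆ Astar t := by
    intro C hCA hCinv
    have key : ∀ s : ℕ, ∀ t ∈ I, C t ⊆ phi F t (t - (s : ℤ)) '' C (t - (s : ℤ)) := by
      intro s
      induction s with
      | zero =>
          intro t ht x hx
          refine ⟨x, ?_, ?_⟩ <;> simp only [Nat.cast_zero, sub_zero]
          · exact hx
          · exact phi_self F t x
      | succ s ih =>
          intro t ht x hx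
          have ht1 : t - 1 ∈ I := hIin t ht _ (by omega)
          have hinvC : F (t - 1) '' C (t - 1) = C t := by
            have := hCinv (t - 1) ht1 (by simpa using ht)
            rwa [sub_add_cancel] at this
          rw [← hinvC] at hx
          obtain ⟨c, hc, rfl⟩ := hx
          obtain ⟨c', hc', hph⟩ := ih (t - 1) ht1 hc
          have e : t - ((s + 1 : ℕ) : ℤ) = (t - 1) - (s : ℤ) := by push_cast; ring
          refine ⟨c', by rw [e]; exact hc', ?_⟩
          rw [e]
          have hps := phi_step F (t - 1) s c'
          rw [sub_add_cancel] at hps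
          rw [hps, hph]
    intro t ht x hx
    rw [hAstar]
    refine Set.mem_iInter.2 fun s => ?_
    obtain ⟨c', hc', hph⟩ := key s t ht hx
    exact ⟨c', hCA _ (hIin t ht _ (by omega)) hc', hph⟩
  -- pullback attraction
  have hattr : ∀ τ ∈ I,
      Tendsto (fun s : ℕ => semidist (phi F τ (τ - (s : ℤ)) '' A (τ - (s : ℤ))) (Astar τ))
        atTop (𝓝 0) := by
    intro τ hτ
    obtain ⟨y₀, hy₀⟩ := hne τ hτ
    obtain ⟨R, hR⟩ := hCbd.subset_closedBall y₀
    simp only [semidist]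
    have hKne : ∀ s : ℕ, (phi F τ (τ - (s : ℤ)) '' A (τ - (s : ℤ))).Nonempty :=
      fun s => (hAne _ (hIin τ hτ _ (by omega))).image _
    have hKsubA : ∀ s : ℕ, phi F τ (τ - (s : ℤ)) '' A (τ - (s : ℤ)) ⊆ A τ := by
      rintro s x ⟨u, hu, rfl⟩
      exact hphiA τ hτ s u hu
    have hbd : ∀ s : ℕ, ∀ r ∈ (fun a => infDist a (Astar τ)) ''
        (phi F τ (τ - (s : ℤ)) '' A (τ - (s : ℤ))), r ≤ R := by
      rintro s r ⟨x, hx, rfl⟩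
      calc infDist x (Astar τ) ≤ dist x y₀ := infDist_le_dist_of_mem hy₀
        _ ≤ R := by
            have : x ∈ closedBall y₀ R := hR (hCsub τ hτ (hKsubA s hx))
            simpa [Metric.mem_closedBall] using this
    have hbdd : ∀ s : ℕ, BddAbove ((fun a => infDist a (Astar τ)) ''
        (phi F τ (τ - (s : ℤ)) '' A (τ - (s : ℤ)))) := fun s => ⟨R, fun r hr => hbd s r hr⟩
    have hfnonneg : ∀ s : ℕ, 0 ≤ sSup ((fun a => infDist a (Astar τ)) ''
        (phi F τ (τ - (s : ℤ)) '' A (τ - (s : ℤ)))) := by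
      intro s
      apply Real.sSup_nonneg
      rintro r ⟨x, hx, rfl⟩
      exact infDist_nonneg
    have hanti : ∀ s' s : ℕ, s' ≤ s →
        sSup ((fun a => infDist a (Astar τ)) '' (phi F τ (τ - (s : ℤ)) '' A (τ - (s : ℤ))))
        ≤ sSup ((fun a => infDist a (Astar τ)) '' (phi F τ (τ - (s' : ℤ)) '' A (τ - (s' : ℤ)))) := by
      intro s' s hss
      exact csSup_le_csSup (hbdd s') ((hKne s).image _)
        (Set.image_mono (hKmono τ hτ s' s hss))
    have hkey : ∀ ε : ℝ, 0 < ε → ∃ N : ℕ,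
        sSup ((fun a => infDist a (Astar τ)) '' (phi F τ (τ - (N : ℤ)) '' A (τ - (N : ℤ)))) < ε := by
      intro ε hε
      by_contra hcon
      push_neg at hcon
      have hch : ∀ s : ℕ, ∃ u ∈ A (τ - (s : ℤ)),
          ε / 2 < infDist (phi F τ (τ - (s : ℤ)) u) (Astar τ) := by
        intro s
        have h2 : ε / 2 < sSup ((fun a => infDist a (Astar τ)) ''
            (phi F τ (τ - (s : ℤ)) '' A (τ - (s : ℤ)))) :=
          lt_of_lt_of_le (by linarith) (hcon s)
        obtain ⟨r, hr, hlt⟩ := exists_lt_of_lt_csSup ((hKne s).image _) h2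
        obtain ⟨x, hx, rfl⟩ := hr
        obtain ⟨u, hu, rfl⟩ := hx
        exact ⟨u, hu, hlt⟩
      choose a haA hadist using hch
      obtain ⟨ψ, hψ, y, hy⟩ := hpac τ hτ id tendsto_id a
        (fun n => hAU _ (hIin τ hτ _ (by omega)) (haA n)) (hrange τ hτ id a haA)
      have hyA : y ∈ Astar τ := hLmem τ hτ ψ (fun n => a (ψ n)) hψ.tendsto_atTop
        (fun n => haA (ψ n)) y (by simpa using hy)
      have hd := ((continuous_infDist_pt (Astar τ)).tendsto y).comp hy
      have h0 : infDist y (Astar τ) = 0 := infDist_zero_of_mem hyA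
      have hge : ε / 2 ≤ infDist y (Astar τ) :=
        ge_of_tendsto hd (Filter.Eventually.of_forall fun n => (hadist (ψ n)).le)
      rw [h0] at hge
      linarith
    rw [Metric.tendsto_atTop]
    intro ε hε
    obtain ⟨N, hN⟩ := hkey ε hε
    refine ⟨N, fun n hn => ?_⟩
    rw [Real.dist_eq, sub_zero, abs_of_nonneg (hfnonneg n)]
    exact lt_of_le_of_lt (hanti N n hn) hN
  exact ⟨fun τ hτ => ⟨hne τ hτ, hcpt τ hτ, hsubA τ⟩, hinv, hmax, hattr⟩
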